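/- For every t ∈ Fin K, the K-step multi-timescale Bellman optimality operator H_t = T_t ∘ T_{t+1 mod K} ∘ ⋯ ∘ T_{t+K−1 mod K} has a unique fixed point Q*_t : S × A → ℝ, i.e., there exists exactly one Q with H_t Q = Q. -/

import Mathlib

private lemma abs_sup'_sub_sup'_le {A : Type*} [Fintype A] [Nonempty A]
    (f g : A → ℝ) (c : ℝ) (h : ∀ a, |f a - g a| ≤ c) :
    |Finset.univ.sup' Finset.univ_nonempty f - Finset.univ.sup' Finset.univ_nonempty g| ≤ c := by
  rw [abs_sub_le_iff]
  constructor
  · rw [sub_le_iff_le_add]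
    apply Finset.sup'_le
    intro a _
    have : f a ≤ g a + c := by have := (abs_sub_le_iff.mp (h a)).1; linarith
    have h2 := Finset.le_sup' g (Finset.mem_univ a)
    linarith
  · rw [sub_le_iff_le_add]
    apply Finset.sup'_le
    intro a _
    have : g a ≤ f a + c := by have := (abs_sub_le_iff.mp (h a)).2; linarith
    have h2 := Finset.le_sup' f (Finset.mem_univ a)
    linarith

private lemma pmf_sum_toReal_eq_one {S : Type*} [Fintype S] (q : PMF S) :
    ∑ s : S, (q s).toReal = 1 := by
  have h1 : ∑ s : S, q s = 1 := by
    have := q.tsum_coe; rwa [tsum_fintype] at this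
  have h2 : (∑ s : S, q s).toReal = 1 := by rw [h1]; simp
  rw [← h2, ENNReal.toReal_sum]
  intro s _
  exact (q.apply_lt_top s).ne

theorem k_step_bellman_unique_fixed_point
    {S A : Type*} [Fintype S] [Fintype A] [Nonempty S] [Nonempty A]
    (K : ℕ) (hK : 0 < K) (γ : ℝ) (hγ0 : 0 ≤ γ) (hγ1 : γ < 1)
    (r : Fin K → S × A → ℝ) (p : Fin K → S × A → PMF S) (Γ : Fin K → A → A)
    (T : Fin K → (S × A → ℝ) → (S × A → ℝ))
    (hT : ∀ (t : Fin K) (Q : S × A → ℝ) (s : S) (a : A),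
      T t Q (s, a) = r t (s, a) + γ * ∑ s' : S, ((p t (s, a)) s').toReal *
        (Finset.univ.sup' Finset.univ_nonempty fun a' : A => Q (s', Γ t a')))
    (t : Fin K)
    (H : (S × A → ℝ) → (S × A → ℝ))
    (hH : ∀ Q : S × A → ℝ,
      H Q = (List.range K).foldr
        (fun j Q' => T ⟨(t.val + j) % K, Nat.mod_lt _ hK⟩ Q') Q) :
    ∃! Q : S × A → ℝ, H Q = Q := by
  set γn : NNReal := ⟨γ, hγ0⟩ with hγn
  -- each T u is Lipschitz with constant γ
  have hlip : ∀ u : Fin K, LipschitzWith γn (T u) := by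
    intro u
    apply LipschitzWith.of_dist_le_mul
    intro Q1 Q2
    show dist (T u Q1) (T u Q2) ≤ γ * dist Q1 Q2
    have hd : (0:ℝ) ≤ γ * dist Q1 Q2 := mul_nonneg hγ0 dist_nonneg
    rw [dist_pi_le_iff hd]
    rintro ⟨s, a⟩
    rw [Real.dist_eq, hT u Q1 s a, hT u Q2 s a]
    have key : ∀ s' : S,
        |(Finset.univ.sup' Finset.univ_nonempty fun a' : A => Q1 (s', Γ u a')) -
         (Finset.univ.sup' Finset.univ_nonempty fun a' : A => Q2 (s', Γ u a'))| ≤ dist Q1 Q2 := by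
      intro s'
      apply abs_sup'_sub_sup'_le
      intro a'
      have := dist_le_pi_dist Q1 Q2 (s', Γ u a')
      rwa [Real.dist_eq] at this
    have : r u (s,a) + γ * (∑ s' : S, ((p u (s, a)) s').toReal *
        (Finset.univ.sup' Finset.univ_nonempty fun a' : A => Q1 (s', Γ u a'))) -
        (r u (s,a) + γ * (∑ s' : S, ((p u (s, a)) s').toReal *
        (Finset.univ.sup' Finset.univ_nonempty fun a' : A => Q2 (s', Γ u a'))))
        = γ * ∑ s' : S, ((p u (s, a)) s').toReal *
          ((Finset.univ.sup' Finset.univ_nonempty fun a' : A => Q1 (s', Γ u a')) -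
           (Finset.univ.sup' Finset.univ_nonempty fun a' : A => Q2 (s', Γ u a'))) := by
      simp only [mul_sub, Finset.sum_sub_distrib]
      ring
    rw [this, abs_mul, abs_of_nonneg hγ0]
    apply mul_le_mul_of_nonneg_left _ hγ0
    calc |∑ s' : S, ((p u (s, a)) s').toReal * _| ≤
        ∑ s' : S, |((p u (s, a)) s').toReal *
          ((Finset.univ.sup' Finset.univ_nonempty fun a' : A => Q1 (s', Γ u a')) -
           (Finset.univ.sup' Finset.univ_nonempty fun a' : A => Q2 (s', Γ u a')))| :=
          Finset.abs_sum_le_sum_abs _ _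
      _ ≤ ∑ s' : S, ((p u (s, a)) s').toReal * dist Q1 Q2 := by
          apply Finset.sum_le_sum
          intro s' _
          rw [abs_mul, abs_of_nonneg ENNReal.toReal_nonneg]
          exact mul_le_mul_of_nonneg_left (key s') ENNReal.toReal_nonneg
      _ = dist Q1 Q2 := by
          rw [← Finset.sum_mul, pmf_sum_toReal_eq_one, one_mul]
  -- H is Lipschitz with constant γ^K
  have hlipfold : ∀ l : List ℕ, LipschitzWith (γn ^ l.length)
      (fun Q : S × A → ℝ => l.foldr (fun j Q' => T ⟨(t.val + j) % K, Nat.mod_lt _ hK⟩ Q') Q) := by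
    intro l
    induction l with
    | nil => simp only [List.length_nil, pow_zero, List.foldr_nil]; exact LipschitzWith.id
    | cons j l ih =>
        have := (hlip ⟨(t.val + j) % K, Nat.mod_lt _ hK⟩).comp ih
        simpa [pow_succ, mul_comm, Function.comp_def] using this
  have hHeq : H = fun Q : S × A → ℝ =>
      (List.range K).foldr (fun j Q' => T ⟨(t.val + j) % K, Nat.mod_lt _ hK⟩ Q') Q :=
    funext hH
  have hHlip : LipschitzWith (γn ^ K) H := by
    rw [hHeq]
    simpa using hlipfold (List.range K)
  have hcontr : ContractingWith (γn ^ K) H := by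
    refine ⟨?_, hHlip⟩
    have : γn < 1 := by
      rw [← NNReal.coe_lt_coe]; exact hγ1
    exact pow_lt_one' this hK.ne'
  refine ⟨hcontr.fixedPoint H, hcontr.fixedPoint_isFixedPt, ?_⟩
  intro Q hQ
  exact hcontr.fixedPoint_unique hQ
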